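/- Let q be a prime power and let r ≥ 2, ℓ ≥ 2, n ≥ 1 be integers with n ≤ q^ℓ + r − 1. Let H_1, …, H_n be ℓ-dimensional 𝔽_q-subspaces of V = 𝔽_q^{rℓ} satisfying the r-wise spanning condition. If there exist i ∈ {1,…,n} and an 𝔽_q-subspace W ≤ V with dim W = (r-1)ℓ such that ∑_{j≠i} dim(W ∩ H_j) = (r−1)·(q^ℓ − 1)/(q − 1), then r ≤ q. -/

import Mathlib

open Module Finset

lemma aux_pow_ge' (p a : ℕ) : p * a + 1 ≤ (p + 1) ^ a := by
  induction a with
  | zero => simp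
  | succ a ih =>
    have h1 : 1 ≤ (p + 1) ^ a := Nat.one_le_pow _ _ (by omega)
    have e : (p + 1) ^ (a + 1) = (p + 1) ^ a + p * (p + 1) ^ a := by ring
    have hm : p * (a + 1) = p * a + p := by ring
    have h2 : p * 1 ≤ p * (p + 1) ^ a := Nat.mul_le_mul_left _ h1
    omega

lemma aux_pow_gt' (p a : ℕ) (hp : 1 ≤ p) (ha : 2 ≤ a) : p * a + 1 < (p + 1) ^ a := by
  induction a with
  | zero => omega
  | succ a ih =>
    rcases Nat.lt_or_ge a 2 with h | h
    · interval_cases a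
      · omega
      · have e : (p + 1) ^ (1 + 1) = p * p + 2 * p + 1 := by ring
        have : 1 * 1 ≤ p * p := Nat.mul_le_mul hp hp
        omega
    · have hs := ih h
      have h1 : 1 ≤ (p + 1) ^ a := Nat.one_le_pow _ _ (by omega)
      have e : (p + 1) ^ (a + 1) = (p + 1) ^ a + p * (p + 1) ^ a := by ring
      have hm : p * (a + 1) = p * a + p := by ring
      have h2 : p * 1 ≤ p * (p + 1) ^ a := Nat.mul_le_mul_left _ h1
      omega

lemma aux_final (p s d : ℕ) (hp : 1 ≤ p) (hs : p + 2 ≤ s) (h : (1 + d) * s ≤ p + d + 1) :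
    False := by
  have h1 : (1 + d) * (p + 2) ≤ (1 + d) * s := Nat.mul_le_mul_left _ hs
  nlinarith


/-- Corollary: attaining the incidence-multiplicity bound forces `r ≤ q`.
Assume `ℓ ≥ 2` and `n ≤ q^ℓ + r - 1` (the general MDS length bound). If some node `i`
admits a subspace `W` of dimension `(r-1)ℓ` with
`∑_{j ≠ i} dim (W ⊓ H j) = (r-1)·(q^ℓ-1)/(q-1)`, then `r ≤ q`. -/
theorem attaining_incidence_multiplicity_bound_forces_r_le_q
    (q r ℓ n : ℕ) (hr : 2 ≤ r) (hℓ : 2 ≤ ℓ) (hn : 1 ≤ n)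
    (hlen : n ≤ q ^ ℓ + r - 1)
    (F : Type*) [Field F] [Fintype F] (hq : Fintype.card F = q)
    (H : Fin n → Submodule F (Fin (r * ℓ) → F))
    (hdim : ∀ j, finrank F (H j) = ℓ)
    (hspan : ∀ J : Finset (Fin n), J.card = r → (⨆ j ∈ J, H j) = ⊤)
    (hattain : ∃ (i : Fin n) (W : Submodule F (Fin (r * ℓ) → F)),
      finrank F W = (r - 1) * ℓ ∧
      ∑ j ∈ Finset.univ.erase i, finrank F ↥(W ⊓ H j)
        = (r - 1) * ((q ^ ℓ - 1) / (q - 1))) :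
    r ≤ q := by
  classical
  obtain ⟨i, W, hW, hsum⟩ := hattain
  have hq2 : 2 ≤ q := by rw [← hq]; exact Fintype.one_lt_card
  set V : Type _ := Fin (r * ℓ) → F with hVdef
  have hVrank : finrank F V = r * ℓ := Module.finrank_fin_fun F
  -- basic arithmetic about (r-1)*ℓ
  have hrl : (r - 1) * ℓ + ℓ = r * ℓ := by
    have h1 : (r - 1) * ℓ = r * ℓ - 1 * ℓ := by rw [← Nat.sub_mul]
    have h2 : 1 * ℓ ≤ r * ℓ := Nat.mul_le_mul_right _ (by omega)
    omega
  -- geometric series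
  set s : ℕ := (q ^ ℓ - 1) / (q - 1) with hsdef
  have hdvd : (q - 1) ∣ q ^ ℓ - 1 := by
    simpa using Nat.sub_dvd_pow_sub_pow q 1 ℓ
  have hQs : (q - 1) * s = q ^ ℓ - 1 := by
    rw [hsdef, Nat.mul_div_cancel' hdvd]
  have hQ1 : q * q ≤ q ^ ℓ := by
    calc q * q = q ^ 2 := (sq q).symm
      _ ≤ q ^ ℓ := Nat.pow_le_pow_right (by omega) hℓ
  -- the intersection dimensions
  set a : Fin n → ℕ := fun j => finrank F ↥(W ⊓ H j) with hadef
  have ha_le : ∀ j, a j ≤ ℓ := by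
    intro j
    rw [← hdim j]
    exact Submodule.finrank_mono inf_le_right
  -- dual annihilators
  set D := Module.Dual F V with hDdef
  haveI : Finite D := Module.finite_of_finite F
  letI : Fintype D := Fintype.ofFinite D
  set A : Submodule F D := W.dualAnnihilator with hAdef
  set B : Fin n → Submodule F D := fun j => (W ⊔ H j).dualAnnihilator with hBdef
  have hArank : finrank F A = ℓ := by
    have e1 : finrank F ↥A = finrank F (V ⧸ W) :=
      (Subspace.quotEquivAnnihilator W).symm.finrank_eq
    have e2 : finrank F (V ⧸ W) + finrank F W = finrank F V :=
      Submodule.finrank_quotient_add_finrank W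
    rw [hW, hVrank] at e2
    omega
  have hBrank : ∀ j, finrank F (B j) = a j := by
    intro j
    have e1 : finrank F ↥(B j) = finrank F (V ⧸ (W ⊔ H j)) :=
      (Subspace.quotEquivAnnihilator (W ⊔ H j)).symm.finrank_eq
    have e2 : finrank F (V ⧸ (W ⊔ H j)) + finrank F ↥(W ⊔ H j) = finrank F V :=
      Submodule.finrank_quotient_add_finrank _
    have e3 : finrank F ↥(W ⊔ H j) + finrank F ↥(W ⊓ H j) = finrank F W + finrank F (H j) :=
      Submodule.finrank_sup_add_finrank_inf_eq W (H j)
    rw [hW, hdim j] at e3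
    rw [hVrank] at e2
    have h5 := ha_le j
    have e4 : a j = finrank F ↥(W ⊓ H j) := rfl
    omega
  have hBA : ∀ j, B j ≤ A := fun j => Submodule.dualAnnihilator_anti le_sup_left
  -- cardinalities
  have hcardA : (univ.filter (fun φ : D => φ ∈ A)).card = q ^ ℓ := by
    rw [← Fintype.card_subtype, card_eq_pow_finrank (K := F), hq, hArank]
  have hcardB : ∀ j, (univ.filter (fun φ : D => φ ∈ B j)).card = q ^ a j := by
    intro j
    rw [← Fintype.card_subtype, card_eq_pow_finrank (K := F), hq, hBrank]
  set J : Finset (Fin n) := univ.erase i with hJdef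
  set Φ : Finset D := (univ.filter (fun φ : D => φ ∈ A)).erase 0 with hΦdef
  have hΦcard : Φ.card = q ^ ℓ - 1 := by
    rw [hΦdef, card_erase_of_mem (by simp [Submodule.zero_mem]), hcardA]
  -- per-φ bound
  have hperφ : ∀ φ ∈ Φ, (J.filter (fun j => φ ∈ B j)).card ≤ r - 1 := by
    intro φ hφ
    have hφ0 : φ ≠ 0 := (Finset.mem_erase.mp hφ).1
    by_contra hcon
    push_neg at hcon
    have hrle : r ≤ (J.filter (fun j => φ ∈ B j)).card := by omega
    obtain ⟨K, hKsub, hKcard⟩ := Finset.exists_subset_card_eq hrle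
    have htop := hspan K hKcard
    have hker : ∀ j ∈ K, H j ≤ LinearMap.ker φ := by
      intro j hj x hx
      have hjB : φ ∈ B j := (Finset.mem_filter.mp (hKsub hj)).2
      rw [hBdef, Submodule.mem_dualAnnihilator] at hjB
      exact hjB x (Submodule.mem_sup_right hx)
    have : LinearMap.ker φ = ⊤ := by
      rw [eq_top_iff, ← htop]
      exact iSup₂_le hker
    exact hφ0 (LinearMap.ker_eq_top.mp this)
  -- per-j lower bound
  have hperj : ∀ j, q ^ a j - 1 ≤ (Φ.filter (fun φ => φ ∈ B j)).card := by
    intro j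
    have hsub : (univ.filter (fun φ : D => φ ∈ B j)).erase 0 ⊆ Φ.filter (fun φ => φ ∈ B j) := by
      intro φ hφ
      rw [Finset.mem_erase, Finset.mem_filter] at hφ
      rw [Finset.mem_filter, hΦdef, Finset.mem_erase, Finset.mem_filter]
      exact ⟨⟨hφ.1, Finset.mem_univ _, hBA j hφ.2.2⟩, hφ.2.2⟩
    calc q ^ a j - 1
        = ((univ.filter (fun φ : D => φ ∈ B j)).erase 0).card := by
          rw [card_erase_of_mem (by simp [Submodule.zero_mem]), hcardB]
      _ ≤ _ := Finset.card_le_card hsub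
  -- double counting
  have hdouble : ∑ j ∈ J, (Φ.filter (fun φ => φ ∈ B j)).card
      = ∑ φ ∈ Φ, (J.filter (fun j => φ ∈ B j)).card := by
    simp_rw [Finset.card_filter]
    exact Finset.sum_comm
  have hupper : ∑ j ∈ J, (Φ.filter (fun φ => φ ∈ B j)).card ≤ (q ^ ℓ - 1) * (r - 1) := by
    rw [hdouble]
    calc ∑ φ ∈ Φ, (J.filter (fun j => φ ∈ B j)).card ≤ ∑ _φ ∈ Φ, (r - 1) :=
          Finset.sum_le_sum hperφ
      _ = Φ.card * (r - 1) := by rw [Finset.sum_const, smul_eq_mul]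
      _ = (q ^ ℓ - 1) * (r - 1) := by rw [hΦcard]
  -- the sum identity
  have hsumJ : ∑ j ∈ J, a j = (r - 1) * s := hsum
  have hkey : ∑ j ∈ J, (q - 1) * a j = (q ^ ℓ - 1) * (r - 1) := by
    rw [← Finset.mul_sum, hsumJ, ← mul_assoc, mul_comm (q-1) (r-1), mul_assoc, hQs,
      mul_comm]
  -- chain of inequalities and equality extraction
  have hptwise : ∀ j ∈ J, (q - 1) * a j ≤ q ^ a j - 1 := by
    intro j _
    have := aux_pow_ge' (q - 1) (a j)
    have hq1 : q - 1 + 1 = q := by omega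
    rw [hq1] at this
    have : 1 ≤ q ^ a j := Nat.one_le_pow _ _ (by omega)
    omega
  have hsumle : ∑ j ∈ J, (q ^ a j - 1) ≤ ∑ j ∈ J, (q - 1) * a j := by
    calc ∑ j ∈ J, (q ^ a j - 1) ≤ ∑ j ∈ J, (Φ.filter (fun φ => φ ∈ B j)).card :=
          Finset.sum_le_sum (fun j _ => hperj j)
      _ ≤ (q ^ ℓ - 1) * (r - 1) := hupper
      _ = ∑ j ∈ J, (q - 1) * a j := hkey.symm
  have heq : ∀ j ∈ J, (q - 1) * a j = q ^ a j - 1 := by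
    have hle : ∑ j ∈ J, (q - 1) * a j ≤ ∑ j ∈ J, (q ^ a j - 1) := Finset.sum_le_sum hptwise
    have := (Finset.sum_eq_sum_iff_of_le hptwise).mp (le_antisymm hle hsumle)
    exact this
  have ha1 : ∀ j ∈ J, a j ≤ 1 := by
    intro j hj
    by_contra hcon
    push_neg at hcon
    have h2 : 2 ≤ a j := hcon
    have := aux_pow_gt' (q - 1) (a j) (by omega) h2
    have hq1 : q - 1 + 1 = q := by omega
    rw [hq1] at this
    have he := heq j hj
    have : 1 ≤ q ^ a j := Nat.one_le_pow _ _ (by omega)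
    omega
  -- count: sum ≤ n - 1
  have hJcard : J.card = n - 1 := by
    rw [hJdef, Finset.card_erase_of_mem (Finset.mem_univ i), Finset.card_univ, Fintype.card_fin]
  have hTle : (r - 1) * s ≤ n - 1 := by
    rw [← hsumJ, ← hJcard]
    calc ∑ j ∈ J, a j ≤ ∑ _j ∈ J, 1 := Finset.sum_le_sum ha1
      _ = J.card := by simp
  -- final arithmetic
  by_contra hcon
  push_neg at hcon
  have hr1 : q + 1 ≤ r := hcon
  -- s ≥ q + 1
  have hsge : q + 1 ≤ s := by
    have h1 : (q - 1) * (q + 1) ≤ (q - 1) * s := by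
      rw [hQs]
      have e : (q - 1) * (q + 1) + 1 = q * q := by
        cases q with
        | zero => omega
        | succ p => simp only [Nat.succ_sub_one]; ring
      omega
    exact Nat.le_of_mul_le_mul_left h1 (by omega)
  -- (r - q) * s ≤ r - 1
  have hsplit : (r - 1) * s = (q - 1) * s + (r - q) * s := by
    rw [← Nat.add_mul]
    congr 1
    omega
  have hfin : (r - q) * s ≤ r - 1 := by
    have h2 : n - 1 ≤ q ^ ℓ + r - 2 := by omega
    have h3 : q ^ ℓ + r - 2 = (q - 1) * s + (r - 1) := by
      have : 1 ≤ q ^ ℓ := Nat.one_le_pow _ _ (by omega)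
      omega
    rw [hsplit] at hTle
    omega
  exact aux_final (q - 1) s (r - q - 1) (by omega)
    (by omega)
    (by
      have e1 : 1 + (r - q - 1) = r - q := by omega
      have e2 : q - 1 + (r - q - 1) + 1 = r - 1 := by omega
      rw [e1, e2]
      exact hfin)
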